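/- Let Γ be an abelian group acting on a measure space X by measure-preserving transformations T_g, and let P: X → S¹ be measurable. Suppose P takes values in the cyclic group C_{p^n} of p^n-th roots of unity (p prime), and suppose P is a polynomial of degree < d, i.e., Δ_{h₁}⋯Δ_{h_d} P = 1 almost everywhere for all h₁,…,h_d ∈ Γ, where Δ_h P(x) = P(T_h x)·conj(P(x)). If d ≤ p, then for every g ∈ Γ of order p, the function Δ_g(P^p) = 1 almost everywhere; equivalently if the action is ergodic then P^p is constant almost everywhere. -/

import Mathlib

open MeasureTheory

/-- The multiplicative derivative of `φ` with respect to a transformation `S`. -/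
noncomputable def mulDeriv {X U : Type*} [Group U] (S : X → X) (φ : X → U) : X → U :=
  fun x => φ (S x) * (φ x)⁻¹

lemma foldr_mulDeriv_replicate {X U : Type*} [Group U] (S : X → X) (φ : X → U) :
    ∀ d : ℕ, (List.replicate d S).foldr mulDeriv φ = (mulDeriv S)^[d] φ
  | 0 => rfl
  | (d+1) => by
      rw [List.replicate_succ, List.foldr_cons, foldr_mulDeriv_replicate S φ d,
        Function.iterate_succ_apply']

lemma mulDeriv_iter_succ {X U : Type*} [Group U] (S : X → X) (φ : X → U) (k : ℕ) (x : X) :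
    ((mulDeriv S)^[k] φ) (S x) = ((mulDeriv S)^[k+1] φ) x * ((mulDeriv S)^[k] φ) x := by
  rw [Function.iterate_succ_apply']
  simp [mulDeriv]

/-- Pascal's rule for products of powers in a commutative group. -/
lemma pascal_prod {U : Type*} [CommGroup U] (a : ℕ → U) (m : ℕ) :
    ∏ k ∈ Finset.range (m+2), a k ^ ((m+1).choose k)
      = (∏ k ∈ Finset.range (m+1), a (k+1) ^ (m.choose k))
          * ∏ k ∈ Finset.range (m+1), a k ^ (m.choose k) :=
  calc ∏ k ∈ Finset.range (m+2), a k ^ ((m+1).choose k)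
      = (∏ k ∈ Finset.range (m+1), a (k+1) ^ ((m+1).choose (k+1)))
          * a 0 ^ ((m+1).choose 0) := Finset.prod_range_succ' _ _
    _ = (∏ k ∈ Finset.range (m+1), (a (k+1) ^ (m.choose k) * a (k+1) ^ (m.choose (k+1))))
          * a 0 ^ ((m+1).choose 0) := by
        refine congrArg (· * a 0 ^ ((m+1).choose 0)) (Finset.prod_congr rfl fun k _ => ?_)
        rw [← pow_add, Nat.choose_succ_succ]
    _ = ((∏ k ∈ Finset.range (m+1), a (k+1) ^ (m.choose k))
          * ∏ k ∈ Finset.range (m+1), a (k+1) ^ (m.choose (k+1)))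
          * a 0 ^ ((m+1).choose 0) := by rw [Finset.prod_mul_distrib]
    _ = (∏ k ∈ Finset.range (m+1), a (k+1) ^ (m.choose k))
          * ((∏ k ∈ Finset.range (m+1), a (k+1) ^ (m.choose (k+1)))
              * a 0 ^ (m.choose 0)) := by
        rw [Nat.choose_zero_right, Nat.choose_zero_right, mul_assoc]
    _ = (∏ k ∈ Finset.range (m+1), a (k+1) ^ (m.choose k))
          * ∏ k ∈ Finset.range (m+2), a k ^ (m.choose k) := by
        rw [← Finset.prod_range_succ' (fun k => a k ^ (m.choose k)) (m+1)]
    _ = (∏ k ∈ Finset.range (m+1), a (k+1) ^ (m.choose k))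
          * ∏ k ∈ Finset.range (m+1), a k ^ (m.choose k) := by
        congr 1
        rw [Finset.prod_range_succ, Nat.choose_succ_self, pow_zero, mul_one]

/-- Discrete Taylor expansion for the multiplicative derivative. -/
lemma mulDeriv_taylor {X U : Type*} [CommGroup U] (S : X → X) (φ : X → U) :
    ∀ (m : ℕ) (x : X),
      φ (S^[m] x) = ∏ k ∈ Finset.range (m+1), ((mulDeriv S)^[k] φ) x ^ (m.choose k) := by
  intro m
  induction m with
  | zero => simp
  | succ m ih =>
    intro x
    calc φ (S^[m+1] x) = φ (S^[m] (S x)) := by rw [Function.iterate_succ_apply]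
      _ = ∏ k ∈ Finset.range (m+1), ((mulDeriv S)^[k] φ) (S x) ^ (m.choose k) := ih (S x)
      _ = ∏ k ∈ Finset.range (m+1),
            (((mulDeriv S)^[k+1] φ) x ^ m.choose k * ((mulDeriv S)^[k] φ) x ^ m.choose k) :=
          Finset.prod_congr rfl fun k _ => by rw [mulDeriv_iter_succ, mul_pow]
      _ = (∏ k ∈ Finset.range (m+1), ((mulDeriv S)^[k+1] φ) x ^ m.choose k)
            * ∏ k ∈ Finset.range (m+1), ((mulDeriv S)^[k] φ) x ^ m.choose k :=
          Finset.prod_mul_distrib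
      _ = ∏ k ∈ Finset.range (m+2), ((mulDeriv S)^[k] φ) x ^ ((m+1).choose k) :=
          (pascal_prod (fun k => ((mulDeriv S)^[k] φ) x) m).symm

/-- Let `Γ` be an abelian group acting on a measure space by measure-preserving
transformations, and `P : X → S¹` a measurable phase polynomial of degree `< d` taking
values in the `p^n`-th roots of unity, with `d ≤ p` (`p` prime).  Then for every `g` of
order `p` we have `Δ_g (P^p) = 1` a.e. -/
theorem pow_p_invariant_of_phasePoly
    [MeasurableSpace Circle] [BorelSpace Circle]
    {Γ X : Type*} [AddCommGroup Γ] [MeasurableSpace X]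
    (μ : Measure X) (T : Γ → X → X)
    (hmp : ∀ g : Γ, MeasurePreserving (T g) μ μ)
    (hT0 : T 0 = id) (hTadd : ∀ g h : Γ, T (g + h) = T g ∘ T h)
    (P : X → Circle) (hPmeas : Measurable P)
    (p n d : ℕ) (hp : p.Prime)
    (hval : ∀ x, (P x) ^ (p ^ n) = 1)
    (hpoly : ∀ h : Fin d → Γ,
      ∀ᵐ x ∂μ, (((List.ofFn h).map T).foldr mulDeriv P) x = 1)
    (hd : d ≤ p)
    (g : Γ) (hg : addOrderOf g = p) :
    ∀ᵐ x ∂μ, (P (T g x)) ^ p = (P x) ^ p := by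
  set S : X → X := T g with hS
  set Q : ℕ → X → Circle := fun k => (mulDeriv S)^[k] P with hQdef
  -- S iterated p times is the identity
  have hiter : ∀ m : ℕ, S^[m] = T (m • g) := by
    intro m
    induction m with
    | zero => simp [hT0]
    | succ m ihm =>
      rw [Function.iterate_succ', ihm, ← hTadd, succ_nsmul, add_comm (m • g) g]
  have hSp : S^[p] = id := by
    rw [hiter p, ← hg, addOrderOf_nsmul_eq_zero, hT0]
  -- pointwise key identities
  have key0 : ∀ x, ∏ k ∈ Finset.range (p+1), Q k x ^ (p.choose k) = P x := by
    intro x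
    rw [← mulDeriv_taylor S P p x, hSp, id_eq]
  have key1 : ∀ x, ∏ k ∈ Finset.range p, Q (k+1) x ^ (p.choose (k+1)) = 1 := by
    intro x
    have h := key0 x
    rw [Finset.prod_range_succ' (fun k => Q k x ^ (p.choose k)) p] at h
    have hQ0 : Q 0 x ^ (p.choose 0) = P x := by simp [hQdef]
    rw [hQ0, mul_eq_right] at h
    exact h
  have keyr : ∀ (r : ℕ) (x : X),
      ∏ k ∈ Finset.range p, Q (k+1+r) x ^ (p.choose (k+1)) = 1 := by
    intro r
    induction r with
    | zero => simpa using key1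
    | succ r ihr =>
      intro x
      have hstep : ∀ k : ℕ, Q (k+1+(r+1)) x = Q (k+1+r) (S x) * (Q (k+1+r) x)⁻¹ := by
        intro k
        show ((mulDeriv S)^[(k+1+r)+1] P) x = _
        rw [Function.iterate_succ_apply']
        rfl
      calc ∏ k ∈ Finset.range p, Q (k+1+(r+1)) x ^ (p.choose (k+1))
          = ∏ k ∈ Finset.range p,
              (Q (k+1+r) (S x) ^ (p.choose (k+1)) * (Q (k+1+r) x ^ (p.choose (k+1)))⁻¹) :=
            Finset.prod_congr rfl fun k _ => by rw [hstep k, mul_pow, inv_pow]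
        _ = (∏ k ∈ Finset.range p, Q (k+1+r) (S x) ^ (p.choose (k+1)))
              * (∏ k ∈ Finset.range p, Q (k+1+r) x ^ (p.choose (k+1)))⁻¹ := by
            rw [Finset.prod_mul_distrib, Finset.prod_inv_distrib]
        _ = 1 := by rw [ihr (S x), ihr x, inv_one, mul_one]
  -- the degree hypothesis in the direction g
  have hQd : ∀ᵐ x ∂μ, Q d x = 1 := by
    have h := hpoly (fun _ => g)
    have heq : ((List.ofFn fun _ : Fin d => g).map T) = List.replicate d S := by
      rw [List.ofFn_const, List.map_replicate]
    rw [heq, foldr_mulDeriv_replicate] at h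
    exact h
  have hQge : ∀ j : ℕ, ∀ᵐ x ∂μ, Q (d + j) x = 1 := by
    intro j
    induction j with
    | zero => simpa using hQd
    | succ j ihj =>
      have hcomp' : (Q (d+j)) ∘ S =ᵐ[μ] (fun _ => (1 : Circle)) ∘ S :=
        Measure.QuasiMeasurePreserving.ae_eq_comp (hmp g).quasiMeasurePreserving ihj
      filter_upwards [hcomp', ihj] with x h1 h2
      show ((mulDeriv S)^[(d+j)+1] P) x = 1
      rw [Function.iterate_succ_apply']
      show Q (d+j) (S x) * (Q (d+j) x)⁻¹ = 1
      rw [show Q (d+j) (S x) = 1 from h1, h2, inv_one, mul_one]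
  have hQbig : ∀ j : ℕ, d ≤ j → ∀ᵐ x ∂μ, Q j x = 1 := by
    intro j hj
    have := hQge (j - d)
    rwa [Nat.add_sub_cancel' hj] at this
  have hp2 : 2 ≤ p := hp.two_le
  -- main downward induction
  have main : ∀ m : ℕ, ∀ k : ℕ, 1 ≤ k → d ≤ k + m → ∀ᵐ x ∂μ, Q k x ^ p = 1 := by
    intro m
    induction m with
    | zero =>
      intro k hk1 hkd
      filter_upwards [hQbig k (by omega)] with x hx
      rw [hx, one_pow]
    | succ m ihm =>
      intro k hk1 hkd
      by_cases hcase : d ≤ k + m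
      · exact ihm k hk1 hcase
      · have hdkm : d = k + m + 1 := by omega
        have hrest : ∀ᵐ x ∂μ, ∀ j : ℕ, j < p - 1 →
            Q (j + 1 + k) x ^ (p.choose (j+1+1)) = 1 := by
          rw [ae_all_iff]
          intro j
          by_cases hj : j < p - 1
          · by_cases hjd : d ≤ j + 1 + k
            · filter_upwards [hQbig _ hjd] with x hx _
              rw [hx, one_pow]
            · have hlt : j + 1 + 1 < p := by omega
              obtain ⟨c, hc⟩ := hp.dvd_choose_self (k := j+1+1) (by omega) hlt
              filter_upwards [ihm (j + 1 + k) (by omega) (by omega)] with x hx _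
              rw [hc, pow_mul, hx, one_pow]
          · filter_upwards with x hx
            exact absurd hx hj
        filter_upwards [hrest] with x hx
        have h0 := keyr (k-1) x
        have hre : ∏ j ∈ Finset.range p, Q (j+1+(k-1)) x ^ (p.choose (j+1))
            = ∏ j ∈ Finset.range p, Q (j+k) x ^ (p.choose (j+1)) :=
          Finset.prod_congr rfl fun j _ => by rw [show j+1+(k-1) = j+k from by omega]
        rw [hre] at h0
        have hsplit := Finset.prod_range_succ' (fun j => Q (j+k) x ^ (p.choose (j+1))) (p-1)
        rw [show p - 1 + 1 = p from by omega] at hsplit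
        rw [hsplit] at h0
        have hones : ∏ j ∈ Finset.range (p-1), Q (j+1+k) x ^ (p.choose (j+1+1)) = 1 :=
          Finset.prod_eq_one fun j hj => hx j (Finset.mem_range.1 hj)
        rw [hones, one_mul] at h0
        simpa using h0
  filter_upwards [main d 1 le_rfl (by omega)] with x hx
  have hQ1 : Q 1 x = P (S x) * (P x)⁻¹ := rfl
  rw [hQ1, mul_pow, inv_pow, mul_inv_eq_one] at hx
  exact hx
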